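/- Let G be a finite group with κ(G) = 1, let H be a subgroup of G with O^∞(G) ≤ H ≤ G, and let N be a subnormal subgroup of H. Then either O^∞(G) ≤ N or N ≤ O_∞(G). -/

import Mathlib

/-- `κ(G) = 1`: the finite group `G` has exactly one nonabelian composition factor.
Equivalently, there are normal subgroups `A ≤ B` of `G` with `A` soluble, `G/B` soluble
and `B/A` nonabelian simple.  (Solubility of `G/B` is expressed by the derived series of
`G` eventually landing in `B`.) -/
def KappaEqOne (G : Type*) [Group G] : Prop :=
  ∃ (A B : Subgroup G) (hA : A.Normal) (_hB : B.Normal), A ≤ B ∧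
    IsSolvable ↥A ∧ (∃ n, derivedSeries G n ≤ B) ∧
    (letI := hA.subgroupOf B
     IsSimpleGroup (↥B ⧸ A.subgroupOf B) ∧
       ∃ x y : ↥B ⧸ A.subgroupOf B, x * y ≠ y * x)

/-- `N` is the soluble residual `O^∞(G)` of `G`: the smallest normal subgroup with
soluble quotient (solubility of `G/N` is expressed via the derived series of `G`). -/
def IsSolubleResidual {G : Type*} [Group G] (N : Subgroup G) : Prop :=
  N.Normal ∧ (∃ n, derivedSeries G n ≤ N) ∧
    ∀ M : Subgroup G, M.Normal → (∃ n, derivedSeries G n ≤ M) → N ≤ M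

/-- `R` is the soluble radical `O_∞(G)` of `G`: the largest soluble normal subgroup. -/
def IsSolubleRadical {G : Type*} [Group G] (R : Subgroup G) : Prop :=
  R.Normal ∧ IsSolvable ↥R ∧ ∀ M : Subgroup G, M.Normal → IsSolvable ↥M → M ≤ R

/-- `N` is subnormal in `H`: there is a finite chain `N = c 0 ⊴ c 1 ⊴ ⋯ ⊴ c m = H`
in which each term is normal in the next. -/
def SubnormalIn {G : Type*} [Group G] (N H : Subgroup G) : Prop :=
  ∃ (m : ℕ) (c : ℕ → Subgroup G), c 0 = N ∧ c m = H ∧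
    ∀ i < m, c i ≤ c (i + 1) ∧ ∀ g ∈ c (i + 1), ∀ x ∈ c i, g * x * g⁻¹ ∈ c i

section MyHelpers

variable {G : Type*} [Group G]

lemma my_solvable_of_le {X Y : Subgroup G} (h : X ≤ Y) (hY : IsSolvable ↥Y) :
    IsSolvable ↥X := by
  haveI : Group.IsSolvable ↥Y := hY
  exact solvable_of_solvable_injective (Subgroup.inclusion_injective h)

lemma my_solvable_map {G' : Type*} [Group G'] (f : G →* G') {X : Subgroup G}
    (hX : IsSolvable ↥X) : IsSolvable ↥(X.map f) := by
  haveI : Group.IsSolvable ↥X := hX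
  exact solvable_of_surjective (f.subgroupMap_surjective X)

lemma my_perfect_solvable {X : Subgroup G} (hperf : ⁅X, X⁆ = X)
    (hsolv : IsSolvable ↥X) : X = ⊥ := by
  obtain ⟨n, hn⟩ := (isSolvable_def _).mp hsolv
  have key : ∀ k, (derivedSeries ↥X k).map X.subtype = X := by
    intro k
    induction k with
    | zero => rw [derivedSeries_zero, ← MonoidHom.range_eq_map, Subgroup.range_subtype]
    | succ k ih => rw [derivedSeries_succ, Subgroup.map_commutator, ih, hperf]
  have := key n
  rw [hn, Subgroup.map_bot] at this
  exact this.symm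

lemma my_sup_conj {P Q T : Subgroup G} (g : G)
    (hP : ∀ x ∈ P, g * x * g⁻¹ ∈ T) (hQ : ∀ x ∈ Q, g * x * g⁻¹ ∈ T) :
    ∀ x ∈ P ⊔ Q, g * x * g⁻¹ ∈ T := by
  intro x hx
  have h1 : P ≤ T.comap (MulAut.conj g).toMonoidHom := fun y hy => by
    simpa [Subgroup.mem_comap] using hP y hy
  have h2 : Q ≤ T.comap (MulAut.conj g).toMonoidHom := fun y hy => by
    simpa [Subgroup.mem_comap] using hQ y hy
  simpa [Subgroup.mem_comap] using (sup_le h1 h2) hx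

lemma my_mem_normalizer {W : Subgroup G} {g : G}
    (h1 : ∀ x ∈ W, g * x * g⁻¹ ∈ W) (h2 : ∀ x ∈ W, g⁻¹ * x * g⁻¹⁻¹ ∈ W) :
    g ∈ Subgroup.normalizer (W : Set G) := by
  rw [Subgroup.mem_normalizer_iff]
  intro h
  constructor
  · exact h1 h
  · intro hh
    have := h2 _ hh
    have heq : g⁻¹ * (g * h * g⁻¹) * g⁻¹⁻¹ = h := by group
    rwa [heq] at this

lemma my_solvable_of_map {Q : Type*} [Group Q] (X : Subgroup G) (f : G →* Q)
    (hker : IsSolvable ↥(f.ker ⊓ X : Subgroup G)) (himg : IsSolvable ↥(X.map f)) :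
    IsSolvable ↥X := by
  haveI : Group.IsSolvable ↥(f.ker ⊓ X : Subgroup G) := hker; haveI : Group.IsSolvable ↥(X.map f) := himg
  refine solvable_of_ker_le_range (Subgroup.inclusion (inf_le_right : f.ker ⊓ X ≤ X))
    (f.subgroupMap X) ?_
  intro x hx
  have hx1 : f ↑x = 1 := by
    have : ((f.subgroupMap X) x : Q) = 1 := by
      rw [MonoidHom.mem_ker] at hx
      rw [hx]; rfl
    simpa using this
  exact ⟨⟨↑x, ⟨hx1, x.2⟩⟩, rfl⟩

lemma my_solvable_of_comm (X : Subgroup G) (h : ∀ x ∈ X, ∀ y ∈ X, x * y = y * x) :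
    IsSolvable ↥X := by
  refine (isSolvable_def _).mpr ⟨1, ?_⟩
  rw [derivedSeries_one, eq_bot_iff, _root_.commutator]
  rw [Subgroup.commutator_le]
  intro g1 hg1 g2 hg2
  rw [Subgroup.mem_bot, commutatorElement_eq_one_iff_mul_comm]
  exact Subtype.ext (h ↑g1 g1.2 ↑g2 g2.2)

end MyHelpers

lemma my_L6core {G : Type*} [Group G] {R S M D : Subgroup G}
    (hRn : R.Normal) (hRsol : IsSolvable ↥R) (hSperf : ⁅S, S⁆ = S)
    (hSD : S ≤ D) (hMD : M ≤ D) (hMn : ∀ g ∈ D, ∀ x ∈ M, g * x * g⁻¹ ∈ M)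
    (hSMR : S ≤ M ⊔ R) : S ≤ M := by
  classical
  have hSMRD : S ≤ M ⊔ (R ⊓ D) := by
    intro s hs
    have hs' : s ∈ (↑(M ⊔ R) : Set G) := hSMR hs
    rw [Subgroup.mul_normal M R] at hs'
    obtain ⟨x, hx, r, hr, rfl⟩ := hs'
    have hrD : r ∈ D := by
      have : x⁻¹ * (x * r) ∈ D := mul_mem (inv_mem (hMD hx)) (hSD hs)
      simpa [mul_assoc] using this
    exact mul_mem (Subgroup.mem_sup_left hx) (Subgroup.mem_sup_right ⟨hr, hrD⟩)
  set ι : ↥D →* G := D.subtype with hι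
  have hιinj : Function.Injective ι := D.subtype_injective
  set S' : Subgroup ↥D := S.subgroupOf D with hS'
  set M' : Subgroup ↥D := M.subgroupOf D with hM'
  set R' : Subgroup ↥D := (R ⊓ D).subgroupOf D with hR'
  have hmapS : S'.map ι = S := by
    rw [hS', Subgroup.subgroupOf_map_subtype, inf_eq_left.mpr hSD]
  have hmapM : M'.map ι = M := by
    rw [hM', Subgroup.subgroupOf_map_subtype, inf_eq_left.mpr hMD]
  have hmapR : R'.map ι = R ⊓ D := by
    rw [hR', Subgroup.subgroupOf_map_subtype, inf_eq_left.mpr inf_le_right]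
  haveI hM'n : M'.Normal := by
    constructor
    intro n hn g
    have : (↑g : G) * ↑n * (↑g)⁻¹ ∈ M := hMn _ g.2 _ (by simpa [hM', Subgroup.mem_subgroupOf] using hn)
    simpa [hM', Subgroup.mem_subgroupOf] using this
  have hS'perf : ⁅S', S'⁆ = S' := by
    apply Subgroup.map_injective hιinj
    rw [Subgroup.map_commutator, hmapS, hSperf]
  have hR'sol : IsSolvable ↥R' := by
    haveI : Group.IsSolvable ↥(R ⊓ D) := my_solvable_of_le inf_le_left hRsol
    exact solvable_of_solvable_injective
      (f := (Subgroup.subgroupOfEquivOfLe (inf_le_right : R ⊓ D ≤ D)).toMonoidHom)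
      (MulEquiv.injective _)
  have hS'MR : S' ≤ M' ⊔ R' := by
    rw [← Subgroup.map_le_map_iff_of_injective hιinj, Subgroup.map_sup, hmapS, hmapM, hmapR]
    exact hSMRD
  -- quotient of D by M'
  set φ : ↥D →* ↥D ⧸ M' := QuotientGroup.mk' M' with hφ
  have hkerφ : φ.ker = M' := QuotientGroup.ker_mk' M'
  set X : Subgroup (↥D ⧸ M') := S'.map φ with hX
  have hXperf : ⁅X, X⁆ = X := by rw [hX, ← Subgroup.map_commutator, hS'perf]
  have hXle : X ≤ R'.map φ := by
    rw [hX]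
    calc S'.map φ ≤ (M' ⊔ R').map φ := Subgroup.map_mono hS'MR
    _ = M'.map φ ⊔ R'.map φ := Subgroup.map_sup _ _ _
    _ = ⊥ ⊔ R'.map φ := by rw [(Subgroup.map_eq_bot_iff M').mpr (le_of_eq hkerφ.symm)]
    _ = R'.map φ := bot_sup_eq _
  have hXsolv : IsSolvable ↥X := my_solvable_of_le hXle (my_solvable_map φ hR'sol)
  have hXbot : X = ⊥ := my_perfect_solvable hXperf hXsolv
  have hS'M' : S' ≤ M' := by
    have := (Subgroup.map_eq_bot_iff S').mp (hX ▸ hXbot)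
    rwa [hkerφ] at this
  intro s hs
  have : (⟨s, hSD hs⟩ : ↥D) ∈ M' := hS'M' (by simpa [hS', Subgroup.mem_subgroupOf] using hs)
  simpa [hM', Subgroup.mem_subgroupOf] using this

/-- If `S` is perfect normal..., `M` subnormal in `H` via a chain, `S ≤ H`, `S ≤ M ⊔ R`
with `R` normal solvable, then `S ≤ M`. -/
lemma my_L6 {G : Type*} [Group G] {R S : Subgroup G}
    (hRn : R.Normal) (hRsol : IsSolvable ↥R) (hSperf : ⁅S, S⁆ = S) :
    ∀ (m : ℕ) (c : ℕ → Subgroup G),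
      (∀ i < m, c i ≤ c (i + 1) ∧ ∀ g ∈ c (i + 1), ∀ x ∈ c i, g * x * g⁻¹ ∈ c i) →
      S ≤ c m → S ≤ c 0 ⊔ R → S ≤ c 0 := by
  intro m
  induction m with
  | zero => intro c _ h0 _; exact h0
  | succ m ih =>
    intro c hch htop hsup
    have hc1 : S ≤ c 1 := by
      apply ih (fun i => c (i + 1))
      · intro i hi
        exact hch (i + 1) (by omega)
      · exact htop
      · exact le_trans hsup (sup_le_sup_right (hch 0 (by omega)).1 R)
    exact my_L6core hRn hRsol hSperf hc1 (hch 0 (by omega)).1 (hch 0 (by omega)).2 hsup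


/-- Let `G` be a finite group with `κ(G) = 1`, let
`O^∞(G) ≤ H ≤ G` and let `N` be a subnormal subgroup of `H`.  Then either
`O^∞(G) ≤ N` or `N ≤ O_∞(G)`. -/
theorem subnormal_dichotomy_of_kappa_one
    {G : Type*} [Group G] [Finite G] (hκ : KappaEqOne G)
    (Osr R : Subgroup G) (hO : IsSolubleResidual Osr) (hR : IsSolubleRadical R)
    (H N : Subgroup G) (hOH : Osr ≤ H) (hN : SubnormalIn N H) :
    Osr ≤ N ∨ N ≤ R := by
  classical
  obtain ⟨hOn, ⟨n₀, hD0⟩, hOmin⟩ := hO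
  obtain ⟨hRn, hRsol, hRmax⟩ := hR
  haveI := hOn
  haveI := hRn
  -- Osr is perfect
  have hSperf : ⁅Osr, Osr⁆ = Osr := by
    refine le_antisymm (Subgroup.commutator_le.mpr ?_) ?_
    · intro g1 hg1 g2 hg2
      rw [commutatorElement_def]
      exact mul_mem (mul_mem (mul_mem hg1 hg2) (inv_mem hg1)) (inv_mem hg2)
    · refine hOmin _ (Subgroup.commutator_normal Osr Osr) ⟨n₀ + 1, ?_⟩
      rw [derivedSeries_succ]
      exact Subgroup.commutator_mono hD0 hD0
  by_cases hbot : Osr = ⊥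
  · left; rw [hbot]; exact bot_le
  have hnsol : ¬ IsSolvable ↥Osr := fun hs => hbot (my_perfect_solvable hSperf hs)
  -- unpack κ = 1
  obtain ⟨A, B, hA, hB, hAB, hAsol, hDB, hpair⟩ := hκ
  haveI instA' : (A.subgroupOf B).Normal := hA.subgroupOf B
  obtain ⟨hsimp, -⟩ := hpair
  have hSB : Osr ≤ B := hOmin B hB hDB
  have hAR : A ≤ R := hRmax A hA hAsol
  set K : Subgroup G := Osr ⊓ R with hK
  have hKS : K ≤ Osr := inf_le_left
  have hKR : K ≤ R := inf_le_right
  have hKsol : IsSolvable ↥K := my_solvable_of_le hKR hRsol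
  -- the simple-quotient property of B/A
  have simpB : ∀ W : Subgroup G, A ≤ W → W ≤ B → (∀ b ∈ B, ∀ w ∈ W, b * w * b⁻¹ ∈ W) →
      W = A ∨ W = B := by
    intro W hAW hWB hWn
    set W' : Subgroup ↥B := W.subgroupOf B with hW'
    haveI hW'n : W'.Normal := by
      constructor
      intro x hx g
      have := hWn ↑g g.2 ↑x (by simpa [hW', Subgroup.mem_subgroupOf] using hx)
      simpa [hW', Subgroup.mem_subgroupOf] using this
    set ψ : ↥B →* ↥B ⧸ A.subgroupOf B := QuotientGroup.mk' (A.subgroupOf B) with hψ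
    have hWmapn : (W'.map ψ).Normal := hW'n.map ψ (QuotientGroup.mk'_surjective _)
    rcases hsimp.eq_bot_or_eq_top_of_normal _ hWmapn with hb | ht
    · left
      have hle : W' ≤ A.subgroupOf B := by
        have := (Subgroup.map_eq_bot_iff W').mp hb
        rwa [QuotientGroup.ker_mk'] at this
      refine le_antisymm ?_ hAW
      intro w hw
      have : (⟨w, hWB hw⟩ : ↥B) ∈ A.subgroupOf B :=
        hle (by simpa [hW', Subgroup.mem_subgroupOf] using hw)
      simpa [Subgroup.mem_subgroupOf] using this
    · right
      refine le_antisymm hWB ?_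
      have hA'W' : A.subgroupOf B ≤ W' := fun x hx => by
        rw [Subgroup.mem_subgroupOf] at hx ⊢
        exact hAW hx
      have hW'top : W' = ⊤ := by
        have h2 := Subgroup.comap_map_eq ψ W'
        rw [ht, Subgroup.comap_top, QuotientGroup.ker_mk', sup_of_le_left hA'W'] at h2
        exact h2.symm
      intro b hb
      have : (⟨b, hb⟩ : ↥B) ∈ W' := hW'top ▸ Subgroup.mem_top _
      simpa [hW', Subgroup.mem_subgroupOf] using this
  -- B = Osr ⊔ A
  have hBSA : B = Osr ⊔ A := by
    rcases simpB (Osr ⊔ A) le_sup_right (sup_le hSB hAB)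
      (fun b hb => my_sup_conj b
        (fun x hx => Subgroup.mem_sup_left (hOn.conj_mem x hx b))
        (fun x hx => Subgroup.mem_sup_right (hA.conj_mem x hx b))) with h | h
    · exfalso
      exact hnsol (my_solvable_of_le (le_sup_left.trans h.le) hAsol)
    · exact h.symm
  -- K ≤ A
  have hKA : K ≤ A := by
    rcases simpB (K ⊔ A) le_sup_right (sup_le (hKS.trans hSB) hAB)
      (fun b hb => my_sup_conj b
        (fun x hx => Subgroup.mem_sup_left ⟨hOn.conj_mem x hx.1 b, hRn.conj_mem x hx.2 b⟩)
        (fun x hx => Subgroup.mem_sup_right (hA.conj_mem x hx b))) with h | h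
    · exact le_sup_left.trans h.le
    · exfalso
      have : Osr ≤ R := hSB.trans (h ▸ sup_le hKR hAR)
      exact hnsol (my_solvable_of_le this hRsol)
  have hASK : A ⊓ Osr ≤ K := le_inf inf_le_right ((inf_le_left : A ⊓ Osr ≤ A).trans hAR)
  -- trichotomy for S-normalized subgroups between K and Osr
  have simpS : ∀ Z : Subgroup G, K ≤ Z → Z ≤ Osr → (∀ s ∈ Osr, ∀ z ∈ Z, s * z * s⁻¹ ∈ Z) →
      Z = K ∨ Z = Osr := by
    intro Z hKZ hZS hZn
    have hWn : ∀ b ∈ B, ∀ w ∈ Z ⊔ A, b * w * b⁻¹ ∈ Z ⊔ A := by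
      have hnorm : B ≤ Subgroup.normalizer ((Z ⊔ A : Subgroup G) : Set G) := by
        rw [hBSA]
        refine sup_le ?_ ?_
        · intro s hs
          refine my_mem_normalizer ?_ ?_
          · exact my_sup_conj s (fun x hx => Subgroup.mem_sup_left (hZn s hs x hx))
              (fun x hx => Subgroup.mem_sup_right (hA.conj_mem x hx s))
          · exact my_sup_conj s⁻¹ (fun x hx => Subgroup.mem_sup_left (hZn s⁻¹ (inv_mem hs) x hx))
              (fun x hx => Subgroup.mem_sup_right (hA.conj_mem x hx s⁻¹))
        · intro a ha
          have key : ∀ b ∈ A, ∀ x ∈ Z ⊔ A, b * x * b⁻¹ ∈ Z ⊔ A := by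
            intro b hb x hx
            have h1 : x⁻¹ * b * x⁻¹⁻¹ ∈ A := hA.conj_mem b hb x⁻¹
            have heq : b * x * b⁻¹ = x * ((x⁻¹ * b * x⁻¹⁻¹) * b⁻¹) := by group
            rw [heq]
            exact mul_mem hx (Subgroup.mem_sup_right (mul_mem h1 (inv_mem hb)))
          exact my_mem_normalizer (key a ha) (key a⁻¹ (inv_mem ha))
      intro b hb w hw
      exact (Subgroup.mem_normalizer_iff.mp (hnorm hb) w).mp hw
    rcases simpB (Z ⊔ A) le_sup_right (sup_le (hZS.trans hSB) hAB) hWn with h | h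
    · left
      refine le_antisymm ?_ hKZ
      intro z hz
      exact hASK ⟨le_sup_left.trans h.le hz, hZS hz⟩
    · right
      refine le_antisymm hZS ?_
      intro s hs
      have : s ∈ (↑(Z ⊔ A) : Set G) := by rw [h]; exact hSB hs
      rw [Subgroup.mul_normal] at this
      obtain ⟨z, hz, a, ha, rfl⟩ := this
      have haO : a ∈ Osr := by
        have : z⁻¹ * (z * a) ∈ Osr := mul_mem (inv_mem (hZS hz)) hs
        simpa [mul_assoc] using this
      exact mul_mem hz (hKZ (hASK ⟨ha, haO⟩))
  -- pass to the quotient by R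
  set π : G →* G ⧸ R := QuotientGroup.mk' R with hπ
  have hπR : ∀ r ∈ R, π r = 1 := by
    intro r hr
    rw [← MonoidHom.mem_ker, hπ, QuotientGroup.ker_mk']
    exact hr
  have hπsurj : Function.Surjective π := QuotientGroup.mk'_surjective R
  set Sq : Subgroup (G ⧸ R) := Osr.map π with hSq
  haveI hSqn : Sq.Normal := hOn.map π hπsurj
  set Cq : Subgroup (G ⧸ R) := Subgroup.centralizer (Sq : Set (G ⧸ R)) with hCq
  haveI hCqn : Cq.Normal := by
    constructor
    intro c hc q
    rw [hCq, Subgroup.mem_centralizer_iff]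
    intro h hh
    have hconj : q⁻¹ * h * q⁻¹⁻¹ ∈ Sq := hSqn.conj_mem h hh q⁻¹
    have key := Subgroup.mem_centralizer_iff.mp hc _ hconj
    calc h * (q * c * q⁻¹) = q * ((q⁻¹ * h * q⁻¹⁻¹) * c) * q⁻¹ := by group
      _ = q * (c * (q⁻¹ * h * q⁻¹⁻¹)) * q⁻¹ := by rw [key]
      _ = q * c * q⁻¹ * h := by group
  set C : Subgroup G := Cq.comap π with hC
  have hCn : C.Normal := hCqn.comap π
  have hRC : R ≤ C := by
    intro r hr
    rw [hC, Subgroup.mem_comap, hπR r hr]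
    exact one_mem _
  -- (G ⧸ R) ⧸ Sq is solvable
  have hQSqsolv : IsSolvable ((G ⧸ R) ⧸ Sq) := by
    set f : G →* (G ⧸ R) ⧸ Sq := (QuotientGroup.mk' Sq).comp π with hf
    have hfsurj : Function.Surjective f :=
      (QuotientGroup.mk'_surjective Sq).comp hπsurj
    have hkerf : derivedSeries G n₀ ≤ f.ker := by
      intro x hx
      rw [MonoidHom.mem_ker, hf, MonoidHom.comp_apply, ← MonoidHom.mem_ker,
        QuotientGroup.ker_mk']
      exact ⟨x, hD0 hx, rfl⟩
    refine (isSolvable_def _).mpr ⟨n₀, ?_⟩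
    rw [eq_bot_iff]
    calc derivedSeries ((G ⧸ R) ⧸ Sq) n₀ ≤ (derivedSeries G n₀).map f :=
          derivedSeries_le_map_derivedSeries hfsurj n₀
      _ ≤ f.ker.map f := Subgroup.map_mono hkerf
      _ ≤ ⊥ := (Subgroup.map_eq_bot_iff f.ker).mpr le_rfl |>.le
  -- Cq ⊓ Sq = ⊥
  have hCqSq : Cq ⊓ Sq = ⊥ := by
    set W : Subgroup G := (Cq ⊓ Sq).comap π ⊓ Osr with hW
    haveI hCqSqn : (Cq ⊓ Sq).Normal :=
      ⟨fun x hx g => ⟨hCqn.conj_mem x hx.1 g, hSqn.conj_mem x hx.2 g⟩⟩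
    have hKW : K ≤ W := by
      intro k hk
      refine Subgroup.mem_inf.mpr ⟨Subgroup.mem_comap.mpr ?_, hk.1⟩
      rw [hπR k hk.2]
      exact one_mem _
    have hWn : ∀ s ∈ Osr, ∀ w ∈ W, s * w * s⁻¹ ∈ W := by
      intro s hs w hw
      obtain ⟨hw1, hw2⟩ := Subgroup.mem_inf.mp hw
      refine Subgroup.mem_inf.mpr ⟨Subgroup.mem_comap.mpr ?_, hOn.conj_mem w hw2 s⟩
      have := hCqSqn.conj_mem _ (Subgroup.mem_comap.mp hw1) (π s)
      simpa [map_mul, map_inv] using this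
    rcases simpS W hKW inf_le_right hWn with hWK | hWOsr
    · rw [eq_bot_iff]
      intro x hx
      obtain ⟨s, hsO, rfl⟩ := hx.2
      have hsW : s ∈ W := Subgroup.mem_inf.mpr ⟨Subgroup.mem_comap.mpr hx, hsO⟩
      have hsR : s ∈ R := (hWK ▸ hsW : s ∈ K).2
      rw [Subgroup.mem_bot]
      exact hπR s hsR
    · exfalso
      apply hnsol
      have hcomm : ∀ x ∈ Sq, ∀ y ∈ Sq, x * y = y * x := by
        intro x hx y hy
        obtain ⟨s, hsO, rfl⟩ := hx
        have hsW : s ∈ W := hWOsr ▸ hsO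
        have hc : π s ∈ Cq :=
          (Subgroup.mem_inf.mp (Subgroup.mem_comap.mp (Subgroup.mem_inf.mp hsW).1)).1
        exact (Subgroup.mem_centralizer_iff.mp hc y hy).symm
      refine my_solvable_of_map Osr π ?_ ?_
      · refine my_solvable_of_le ?_ hKsol
        intro x hx
        rw [hπ, QuotientGroup.ker_mk'] at hx
        exact ⟨hx.2, hx.1⟩
      · exact my_solvable_of_comm _ hcomm
  -- C is solvable, hence C ≤ R
  have hCsolv : IsSolvable ↥C := by
    refine my_solvable_of_map C π ?_ ?_
    · refine my_solvable_of_le ?_ hRsol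
      intro x hx
      rw [hπ, QuotientGroup.ker_mk'] at hx
      exact hx.1
    · have hmapC : C.map π = Cq := Subgroup.map_comap_eq_self_of_surjective hπsurj Cq
      rw [hmapC]
      refine my_solvable_of_map Cq (QuotientGroup.mk' Sq) ?_ ?_
      · refine my_solvable_of_comm _ ?_
        intro x hx y hy
        have hx' : x ∈ Cq ⊓ Sq := by
          refine ⟨hx.2, ?_⟩
          have := hx.1
          rwa [QuotientGroup.ker_mk'] at this
        rw [hCqSq, Subgroup.mem_bot] at hx'
        rw [hx', one_mul, mul_one]
      · haveI : Group.IsSolvable ((G ⧸ R) ⧸ Sq) := hQSqsolv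
        exact (inferInstance : Group.IsSolvable ↥(Subgroup.map (QuotientGroup.mk' Sq) Cq))
  have hCR : C ≤ R := hRmax C hCn hCsolv
  -- the subnormal chain
  obtain ⟨m, c, hc0, hcm, hch⟩ := hN
  have main : ∀ j, j ≤ m → Osr ≤ c (m - j) ⊔ R ∨ c (m - j) ≤ C := by
    intro j
    induction j with
    | zero =>
      intro _
      left
      rw [Nat.sub_zero, hcm]
      exact le_trans hOH le_sup_left
    | succ j ihj =>
      intro hj1
      have hj : j ≤ m := by omega
      have hii : m - (j + 1) + 1 = m - j := by omega
      have him : m - (j + 1) < m := by omega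
      rcases ihj hj with hsup | hCc
      · rw [← hii] at hsup
        have hnorm : c (m - (j + 1) + 1) ⊔ R ≤ Subgroup.normalizer ((c (m - (j + 1)) ⊔ R : Subgroup G) : Set G) := by
          refine sup_le ?_ ?_
          · intro g hg
            refine my_mem_normalizer ?_ ?_
            · exact my_sup_conj g
                (fun x hx => Subgroup.mem_sup_left ((hch _ him).2 g hg x hx))
                (fun x hx => Subgroup.mem_sup_right (hRn.conj_mem x hx g))
            · exact my_sup_conj g⁻¹
                (fun x hx => Subgroup.mem_sup_left ((hch _ him).2 g⁻¹ (inv_mem hg) x hx))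
                (fun x hx => Subgroup.mem_sup_right (hRn.conj_mem x hx g⁻¹))
          · intro r hr
            have key : ∀ b ∈ R, ∀ x ∈ c (m - (j + 1)) ⊔ R,
                b * x * b⁻¹ ∈ c (m - (j + 1)) ⊔ R := by
              intro b hb x hx
              have h1 : x⁻¹ * b * x⁻¹⁻¹ ∈ R := hRn.conj_mem b hb x⁻¹
              have heq : b * x * b⁻¹ = x * ((x⁻¹ * b * x⁻¹⁻¹) * b⁻¹) := by group
              rw [heq]
              exact mul_mem hx (Subgroup.mem_sup_right (mul_mem h1 (inv_mem hb)))
            exact my_mem_normalizer (key r hr) (key r⁻¹ (inv_mem hr))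
        have hKZ : K ≤ (c (m - (j + 1)) ⊔ R) ⊓ Osr :=
          le_inf (le_trans inf_le_right le_sup_right) inf_le_left
        have hZn : ∀ s ∈ Osr, ∀ z ∈ (c (m - (j + 1)) ⊔ R) ⊓ Osr,
            s * z * s⁻¹ ∈ (c (m - (j + 1)) ⊔ R) ⊓ Osr := by
          intro s hs z hz
          obtain ⟨hz1, hz2⟩ := Subgroup.mem_inf.mp hz
          refine Subgroup.mem_inf.mpr ⟨?_, hOn.conj_mem z hz2 s⟩
          exact (Subgroup.mem_normalizer_iff.mp (hnorm (hsup hs)) z).mp hz1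
        rcases simpS _ hKZ inf_le_right hZn with hZK | hZOsr
        · right
          intro g hg
          refine Subgroup.mem_comap.mpr (Subgroup.mem_centralizer_iff.mpr ?_)
          intro x hx
          obtain ⟨s, hsO, rfl⟩ := hx
          have hsCR : s ∈ (↑(c (m - (j + 1) + 1) ⊔ R) : Set G) := hsup hsO
          rw [Subgroup.mul_normal] at hsCR
          obtain ⟨t, ht, r, hr, heqs⟩ := hsCR
          have hπst : π s = π t := by
            rw [← heqs, map_mul, hπR r hr, mul_one]
          have hcomm1 : π g * π s * (π g)⁻¹ * (π s)⁻¹ ∈ (c (m - (j + 1))).map π := by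
            have hmem : g * (t * g⁻¹ * t⁻¹) ∈ c (m - (j + 1)) :=
              mul_mem hg ((hch _ him).2 t ht g⁻¹ (inv_mem hg))
            refine ⟨g * (t * g⁻¹ * t⁻¹), hmem, ?_⟩
            rw [hπst]
            simp only [map_mul, map_inv]
            group
          have hsSq : π s ∈ Sq := ⟨s, hsO, rfl⟩
          have hcomm2 : π g * π s * (π g)⁻¹ * (π s)⁻¹ ∈ Sq := by
            have ha : π g * π s * (π g)⁻¹ ∈ Sq := hSqn.conj_mem _ hsSq (π g)
            exact mul_mem ha (inv_mem hsSq)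
          have h3 : π g * π s * (π g)⁻¹ * (π s)⁻¹ = 1 := by
            obtain ⟨x', hx', hxeq⟩ := hcomm1
            obtain ⟨s', hs', hseq⟩ := hcomm2
            have hxs : π (x'⁻¹ * s') = 1 := by
              rw [map_mul, map_inv, hxeq, hseq]
              group
            have hmemR : x'⁻¹ * s' ∈ R := by
              have hk : (x'⁻¹ * s') ∈ π.ker := MonoidHom.mem_ker.mpr hxs
              rwa [hπ, QuotientGroup.ker_mk'] at hk
            have hs'Z : s' ∈ (c (m - (j + 1)) ⊔ R) ⊓ Osr := by
              refine Subgroup.mem_inf.mpr ⟨?_, hs'⟩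
              have hrw : s' = x' * (x'⁻¹ * s') := by group
              rw [hrw]
              exact mul_mem (Subgroup.mem_sup_left hx') (Subgroup.mem_sup_right hmemR)
            have hs'R : s' ∈ R := (hZK ▸ hs'Z : s' ∈ K).2
            rw [← hseq]
            exact hπR s' hs'R
          have hcc : π g * π s = π s * π g := commutatorElement_eq_one_iff_mul_comm.mp
            (by rw [commutatorElement_def]; exact h3)
          exact hcc.symm
        · left
          intro s hs
          exact (Subgroup.mem_inf.mp (hZOsr.ge hs)).1
      · right
        rw [← hii] at hCc
        exact le_trans (hch _ him).1 hCc
  rcases main m le_rfl with hsup | hCc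
  · left
    rw [Nat.sub_self, hc0] at hsup
    have hfin := my_L6 hRn hRsol hSperf m c hch
      (show Osr ≤ c m by rw [hcm]; exact hOH)
      (show Osr ≤ c 0 ⊔ R by rw [hc0]; exact hsup)
    rw [hc0] at hfin
    exact hfin
  · right
    rw [Nat.sub_self, hc0] at hCc
    exact le_trans hCc hCR
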